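/- Under the linear regression model with E[XXᵀ] ⪯ σ²I, Var[E] ≤ ξ, and E[⟨v,X⟩⁴] ≤ Cσ⁴ for all unit vectors v, every unit vector v satisfies vᵀ·Cov[∇_w f(w, (X,Y))]·v ≤ 4σ²ξ + 4Cσ⁴‖w* - w‖₂². -/

import Mathlib

open MeasureTheory ProbabilityTheory
open scoped RealInnerProductSpace

/-- For linear regression with `E[XXᵀ] ⪯ σ²I`, `Var[E] ≤ ξ`, and fourth moments
`E[⟨v,X⟩⁴] ≤ Cσ⁴` for unit `v`, every unit vector `v` satisfies
`vᵀ Cov[∇_w f(w,(X,Y))] v ≤ 4σ²ξ + 4Cσ⁴‖w*-w‖²`. -/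
theorem linreg_gradient_covariance_bound {Ω : Type*} [MeasurableSpace Ω]
    (μ : Measure Ω) [IsProbabilityMeasure μ] {d : ℕ}
    (X : Ω → EuclideanSpace ℝ (Fin d)) (e : Ω → ℝ)
    (hX : Measurable X) (he : Measurable e)
    (hindep : IndepFun X e μ)
    (hmean : (∫ ω, e ω ∂μ) = 0)
    (heInt : Integrable e μ) (he2Int : Integrable (fun ω => e ω ^ 2) μ)
    (σ ξ C : ℝ) (hσ : 0 < σ) (hξ : 0 ≤ ξ) (hC : 0 < C)
    (hcov : ∀ v : EuclideanSpace ℝ (Fin d), ‖v‖ = 1 →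
      (∫ ω, ⟪v, X ω⟫ ^ 2 ∂μ) ≤ σ ^ 2)
    (hvar : variance e μ ≤ ξ)
    (hfourth : ∀ v : EuclideanSpace ℝ (Fin d), ‖v‖ = 1 →
      (∫ ω, ⟪v, X ω⟫ ^ 4 ∂μ) ≤ C * σ ^ 4)
    (h4int : ∀ v : EuclideanSpace ℝ (Fin d),
      Integrable (fun ω => ⟪v, X ω⟫ ^ 4) μ)
    (wstar w : EuclideanSpace ℝ (Fin d))
    (g : Ω → EuclideanSpace ℝ (Fin d))
    (hg : ∀ ω, g ω = (-2 * (⟪wstar - w, X ω⟫ + e ω)) • X ω) :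
    ∀ v : EuclideanSpace ℝ (Fin d), ‖v‖ = 1 →
      variance (fun ω => ⟪v, g ω⟫) μ ≤
        4 * σ ^ 2 * ξ + 4 * C * σ ^ 4 * ‖wstar - w‖ ^ 2 := by
  intro v hv
  set u := wstar - w with hu
  set a : Ω → ℝ := fun ω => ⟪u, X ω⟫ with ha
  set b : Ω → ℝ := fun ω => ⟪v, X ω⟫ with hb
  have hma : Measurable a := (measurable_const.inner hX)
  have hmb : Measurable b := (measurable_const.inner hX)
  -- Z = ⟪v, g⟫
  have hZ : ∀ ω, ⟪v, g ω⟫ = -2 * (a ω + e ω) * b ω := by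
    intro ω
    rw [hg ω, real_inner_smul_right]
  -- integrability pieces
  have Ia4 : Integrable (fun ω => a ω ^ 4) μ := h4int u
  have Ib4 : Integrable (fun ω => b ω ^ 4) μ := h4int v
  have Ib2 : Integrable (fun ω => b ω ^ 2) μ := by
    refine Integrable.mono ((integrable_const (1:ℝ)).add Ib4)
      ((hmb.pow_const 2).aestronglyMeasurable) (Filter.Eventually.of_forall fun ω => ?_)
    have h1 : b ω ^ 2 ≤ 1 + b ω ^ 4 := by nlinarith [sq_nonneg (b ω ^ 2 - 1)]
    have h2 : (0:ℝ) ≤ 1 + b ω ^ 4 := by positivity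
    simp only [Pi.add_apply, Real.norm_eq_abs, abs_of_nonneg (sq_nonneg (b ω)), abs_of_nonneg h2]
    exact h1
  have Ia2b2 : Integrable (fun ω => a ω ^ 2 * b ω ^ 2) μ := by
    refine Integrable.mono (Ia4.add Ib4)
      (((hma.pow_const 2).mul (hmb.pow_const 2)).aestronglyMeasurable)
      (Filter.Eventually.of_forall fun ω => ?_)
    have h1 : a ω ^ 2 * b ω ^ 2 ≤ a ω ^ 4 + b ω ^ 4 := by
      nlinarith [sq_nonneg (a ω ^ 2 - b ω ^ 2), sq_nonneg (a ω * b ω)]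
    have h0 : (0:ℝ) ≤ a ω ^ 2 * b ω ^ 2 := by positivity
    have h2 : (0:ℝ) ≤ a ω ^ 4 + b ω ^ 4 := by positivity
    simp only [Pi.add_apply, Real.norm_eq_abs, abs_of_nonneg h0, abs_of_nonneg h2]
    exact h1
  have Iab2 : Integrable (fun ω => a ω * b ω ^ 2) μ := by
    refine Integrable.mono (Ib2.add Ia2b2)
      ((hma.mul (hmb.pow_const 2)).aestronglyMeasurable)
      (Filter.Eventually.of_forall fun ω => ?_)
    have h2 : (0:ℝ) ≤ b ω ^ 2 + a ω ^ 2 * b ω ^ 2 := by positivity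
    simp only [Pi.add_apply, Real.norm_eq_abs, abs_of_nonneg h2, abs_mul,
      abs_of_nonneg (sq_nonneg (b ω))]
    nlinarith [mul_nonneg (sq_nonneg (|a ω| - 1)) (sq_nonneg (b ω)), sq_nonneg (b ω),
      sq_abs (a ω), mul_nonneg (mul_nonneg (abs_nonneg (a ω)) (abs_nonneg (a ω))) (sq_nonneg (b ω))]
  -- independence
  have hab2_indep : IndepFun (fun ω => a ω * b ω ^ 2) e μ := by
    have : IndepFun ((fun x : EuclideanSpace ℝ (Fin d) => ⟪u, x⟫ * ⟪v, x⟫ ^ 2) ∘ X)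
        (id ∘ e) μ :=
      hindep.comp ((measurable_const.inner measurable_id).mul
        ((measurable_const.inner measurable_id).pow_const 2)) measurable_id
    exact this
  have hb2_indep : IndepFun (fun ω => b ω ^ 2) (fun ω => e ω ^ 2) μ := by
    have : IndepFun ((fun x : EuclideanSpace ℝ (Fin d) => ⟪v, x⟫ ^ 2) ∘ X)
        ((fun t : ℝ => t ^ 2) ∘ e) μ :=
      hindep.comp ((measurable_const.inner measurable_id).pow_const 2)
        (measurable_id.pow_const 2)
    exact this
  have Ieab2 : Integrable (fun ω => (a ω * b ω ^ 2) * e ω) μ :=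
    hab2_indep.integrable_mul Iab2 heInt
  have Ib2e2 : Integrable (fun ω => b ω ^ 2 * e ω ^ 2) μ :=
    hb2_indep.integrable_mul Ib2 he2Int
  -- key integral identities
  have int_eab2 : (∫ ω, (a ω * b ω ^ 2) * e ω ∂μ) = 0 := by
    show integral μ ((fun ω => a ω * b ω ^ 2) * e) = 0
    rw [hab2_indep.integral_mul_eq_mul_integral Iab2.aestronglyMeasurable heInt.aestronglyMeasurable, hmean, mul_zero]
  have int_b2e2 : (∫ ω, b ω ^ 2 * e ω ^ 2 ∂μ)
      = (∫ ω, b ω ^ 2 ∂μ) * (∫ ω, e ω ^ 2 ∂μ) := by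
    show integral μ ((fun ω => b ω ^ 2) * fun ω => e ω ^ 2) = _
    exact hb2_indep.integral_mul_eq_mul_integral Ib2.aestronglyMeasurable he2Int.aestronglyMeasurable
  -- bounds on the simple integrals
  have hb2_nonneg : (0:ℝ) ≤ ∫ ω, b ω ^ 2 ∂μ :=
    integral_nonneg fun ω => sq_nonneg _
  have hb2_le : (∫ ω, b ω ^ 2 ∂μ) ≤ σ ^ 2 := hcov v hv
  have he2_le : (∫ ω, e ω ^ 2 ∂μ) ≤ ξ := by
    have hm2 : MemLp e 2 μ :=
      (memLp_two_iff_integrable_sq he.aestronglyMeasurable).2 he2Int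
    have := variance_eq_sub hm2
    have h' : (∫ ω, e ω ^ 2 ∂μ) = variance e μ := by
      simp only [Pi.pow_apply] at this
      rw [this]
      simp [hmean]
    rw [h']; exact hvar
  have he2_nonneg : (0:ℝ) ≤ ∫ ω, e ω ^ 2 ∂μ :=
    integral_nonneg fun ω => sq_nonneg _
  -- fourth moment bound for a
  have int_a2b2 : (∫ ω, a ω ^ 2 * b ω ^ 2 ∂μ) ≤ C * σ ^ 4 * ‖u‖ ^ 2 := by
    by_cases hu0 : u = 0
    · have : ∀ ω, a ω ^ 2 * b ω ^ 2 = 0 := by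
        intro ω; simp [ha, hu0]
      rw [show (fun ω => a ω ^ 2 * b ω ^ 2) = fun _ => (0:ℝ) from funext this]
      simp
      positivity
    · have hn : (0:ℝ) < ‖u‖ := norm_pos_iff.2 hu0
      have ha4 : (∫ ω, a ω ^ 4 ∂μ) ≤ C * σ ^ 4 * ‖u‖ ^ 4 := by
        have hunit : ‖(‖u‖⁻¹ • u : EuclideanSpace ℝ (Fin d))‖ = 1 := by
          rw [norm_smul, norm_inv, norm_norm, inv_mul_cancel₀ hn.ne']
        have h4 := hfourth (‖u‖⁻¹ • u) hunit
        have heq : ∀ ω, ⟪(‖u‖⁻¹ • u : EuclideanSpace ℝ (Fin d)), X ω⟫ ^ 4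
            = ‖u‖⁻¹ ^ 4 * a ω ^ 4 := by
          intro ω
          rw [real_inner_smul_left]
          ring
        rw [funext heq] at h4
        rw [integral_const_mul] at h4
        have h5 := (mul_le_mul_iff_right₀ (by positivity : (0:ℝ) < ‖u‖ ^ 4)).2 h4
        have hone : ‖u‖ ^ 4 * ‖u‖⁻¹ ^ 4 = 1 := by
          field_simp
        calc (∫ ω, a ω ^ 4 ∂μ)
            = ‖u‖ ^ 4 * (‖u‖⁻¹ ^ 4 * ∫ ω, a ω ^ 4 ∂μ) := by
              rw [← mul_assoc, hone, one_mul]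
          _ ≤ ‖u‖ ^ 4 * (C * σ ^ 4) := h5
          _ = C * σ ^ 4 * ‖u‖ ^ 4 := by ring
      have hb4 : (∫ ω, b ω ^ 4 ∂μ) ≤ C * σ ^ 4 := hfourth v hv
      set s := ‖u‖ ^ 2 with hs
      have hspos : (0:ℝ) < s := by positivity
      have hpt : ∀ ω, a ω ^ 2 * b ω ^ 2 ≤ (2 * s)⁻¹ * a ω ^ 4 + (s / 2) * b ω ^ 4 := by
        intro ω
        rw [← sub_nonneg]
        have key : (2*s)⁻¹ * a ω ^ 4 + (s/2) * b ω ^ 4 - a ω ^ 2 * b ω ^ 2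
            = (2*s)⁻¹ * (a ω ^ 2 - s * b ω ^ 2) ^ 2 := by
          field_simp
          ring
        rw [key]
        positivity
      calc (∫ ω, a ω ^ 2 * b ω ^ 2 ∂μ)
          ≤ ∫ ω, (2 * s)⁻¹ * a ω ^ 4 + (s / 2) * b ω ^ 4 ∂μ := by
            refine integral_mono Ia2b2 ?_ hpt
            exact (Ia4.const_mul _).add (Ib4.const_mul _)
        _ = (2 * s)⁻¹ * (∫ ω, a ω ^ 4 ∂μ) + (s / 2) * (∫ ω, b ω ^ 4 ∂μ) := by
            rw [integral_add (Ia4.const_mul _) (Ib4.const_mul _),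
              integral_const_mul, integral_const_mul]
        _ ≤ (2 * s)⁻¹ * (C * σ ^ 4 * ‖u‖ ^ 4) + (s / 2) * (C * σ ^ 4) := by
            gcongr
        _ = C * σ ^ 4 * ‖u‖ ^ 2 := by
            rw [hs]; field_simp; ring
  -- main computation
  have hZmeas : AEStronglyMeasurable (fun ω => ⟪v, g ω⟫) μ := by
    have : (fun ω => ⟪v, g ω⟫) = fun ω => -2 * (a ω + e ω) * b ω := funext hZ
    rw [this]
    exact (((hma.add he).const_mul _).mul hmb).aestronglyMeasurable
  refine le_trans (variance_le_expectation_sq hZmeas) ?_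
  have hsq : ∀ ω, ((fun ω => ⟪v, g ω⟫) ^ 2) ω
      = 4 * (a ω ^ 2 * b ω ^ 2) + 8 * ((a ω * b ω ^ 2) * e ω)
        + 4 * (b ω ^ 2 * e ω ^ 2) := by
    intro ω
    simp only [Pi.pow_apply, hZ ω]
    ring
  calc (μ[(fun ω => ⟪v, g ω⟫) ^ 2])
      = ∫ ω, (4 * (a ω ^ 2 * b ω ^ 2) + 8 * ((a ω * b ω ^ 2) * e ω)
          + 4 * (b ω ^ 2 * e ω ^ 2)) ∂μ := by
        exact integral_congr_ae (Filter.Eventually.of_forall hsq)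
    _ = 4 * (∫ ω, a ω ^ 2 * b ω ^ 2 ∂μ) + 8 * (∫ ω, (a ω * b ω ^ 2) * e ω ∂μ)
          + 4 * (∫ ω, b ω ^ 2 * e ω ^ 2 ∂μ) := by
        have Isum : Integrable
            (fun ω => 4 * (a ω ^ 2 * b ω ^ 2) + 8 * (a ω * b ω ^ 2 * e ω)) μ :=
          (Ia2b2.const_mul 4).add (Ieab2.const_mul 8)
        rw [integral_add Isum (Ib2e2.const_mul 4),
          integral_add (Ia2b2.const_mul 4) (Ieab2.const_mul 8),
          integral_const_mul, integral_const_mul, integral_const_mul]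
    _ ≤ 4 * (C * σ ^ 4 * ‖u‖ ^ 2) + 8 * 0 + 4 * (σ ^ 2 * ξ) := by
        rw [int_eab2, int_b2e2]
        gcongr
    _ = 4 * σ ^ 2 * ξ + 4 * C * σ ^ 4 * ‖u‖ ^ 2 := by ring
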